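/- For 1 < p ≤ 2 and vectors x, y in ℝ^d not both zero, (|x|^{p-2} x − |y|^{p-2} y)·(x − y) ≥ (p − 1) |x − y|^2 (|x| + |y|)^{p−2}. -/

import Mathlib

open Real

private lemma subadd_rpow {q : ℝ} (hq0 : 0 ≤ q) (hq1 : q ≤ 1) {a b : ℝ}
    (ha : 0 ≤ a) (hb : 0 ≤ b) : (a + b) ^ q ≤ a ^ q + b ^ q := by
  lift a to NNReal using ha
  lift b to NNReal using hb
  have := NNReal.rpow_add_le_add_rpow a b hq0 hq1
  exact_mod_cast this

/-- tangent line inequality for the concave function `t ↦ t^(p-1)` -/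
private lemma tangent {p a b : ℝ} (hp1 : 1 < p) (hp2 : p ≤ 2) (ha : 0 < a) (hb : 0 ≤ b) :
    (p - 1) * (a - b) * a ^ (p - 2) ≤ a ^ (p - 1) - b ^ (p - 1) := by
  have hs : (-1 : ℝ) ≤ b / a - 1 := by
    have : 0 ≤ b / a := div_nonneg hb ha.le
    linarith
  have hB := rpow_one_add_le_one_add_mul_self hs (by linarith : (0:ℝ) ≤ p - 1)
    (by linarith : p - 1 ≤ 1)
  have hone : (1 : ℝ) + (b / a - 1) = b / a := by ring
  rw [hone] at hB
  -- hB : (b/a)^(p-1) ≤ 1 + (p-1)*(b/a - 1)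
  have hdiv : (b / a) ^ (p - 1) = b ^ (p - 1) / a ^ (p - 1) :=
    Real.div_rpow hb ha.le _
  have hap : (0:ℝ) < a ^ (p - 1) := Real.rpow_pos_of_pos ha _
  have key : b ^ (p - 1) ≤ a ^ (p - 1) + (p - 1) * ((b / a - 1) * a ^ (p - 1)) := by
    have := mul_le_mul_of_nonneg_right hB hap.le
    rw [hdiv, div_mul_cancel₀ _ hap.ne'] at this
    nlinarith [this]
  have hid : (b / a - 1) * a ^ (p - 1) = (b - a) * a ^ (p - 2) := by
    have h1 : a ^ (p - 1) = a ^ (p - 2) * a := by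
      rw [← Real.rpow_add_one ha.ne']; ring_nf
    rw [h1]
    field_simp
  have key2 : (p - 1) * ((b / a - 1) * a ^ (p - 1)) = (p - 1) * ((b - a) * a ^ (p - 2)) := by
    rw [hid]
  nlinarith [key, key2]

private lemma endpoint1 {p a b : ℝ} (hp1 : 1 < p) (hp2 : p ≤ 2) (ha : 0 < a) (hb : 0 ≤ b)
    (hba : b ≤ a) :
    (p - 1) * (a - b) ^ 2 * (a + b) ^ (p - 2) ≤ (a ^ (p - 1) - b ^ (p - 1)) * (a - b) := by
  have h1 : (a + b) ^ (p - 2) ≤ a ^ (p - 2) :=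
    Real.rpow_le_rpow_of_nonpos ha (by linarith) (by linarith)
  have h2 := tangent hp1 hp2 ha hb
  have hnn : (0:ℝ) ≤ (p - 1) * (a - b) ^ 2 := mul_nonneg (by linarith) (sq_nonneg _)
  nlinarith [mul_le_mul_of_nonneg_left h1 hnn,
    mul_le_mul_of_nonneg_right h2 (by linarith : (0:ℝ) ≤ a - b)]

private lemma endpoint2 {p a b : ℝ} (hp1 : 1 < p) (hp2 : p ≤ 2) (ha : 0 ≤ a) (hb : 0 ≤ b)
    (hab : 0 < a + b) :
    (p - 1) * (a + b) ^ 2 * (a + b) ^ (p - 2) ≤ (a ^ (p - 1) + b ^ (p - 1)) * (a + b) := by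
  have h1 : (a + b) ^ 2 * (a + b) ^ (p - 2) = (a + b) ^ (p - 1) * (a + b) := by
    rw [sq]
    have e1 : (a + b) ^ (p - 1) = (a + b) ^ (p - 2) * (a + b) := by
      rw [← Real.rpow_add_one hab.ne']; ring_nf
    rw [e1]; ring
  have h2 : (a + b) ^ (p - 1) ≤ a ^ (p - 1) + b ^ (p - 1) :=
    subadd_rpow (by linarith) (by linarith) ha hb
  have h3 : (0:ℝ) ≤ (a + b) ^ (p - 1) := (Real.rpow_pos_of_pos hab _).le
  have key : (p - 1) * (a + b) ^ (p - 1) ≤ a ^ (p - 1) + b ^ (p - 1) := by nlinarith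
  nlinarith [h1, mul_le_mul_of_nonneg_right key hab.le]

/-- the scalar core inequality -/
private lemma scalar_key {p a b t : ℝ} (hp1 : 1 < p) (hp2 : p ≤ 2) (ha : 0 ≤ a) (hb : 0 ≤ b)
    (hab : 0 < a + b) (ht1 : -(a * b) ≤ t) (ht2 : t ≤ a * b) :
    (p - 1) * (a * a - 2 * t + b * b) * (a + b) ^ (p - 2) ≤
      a ^ p + b ^ p - (a ^ (p - 2) + b ^ (p - 2)) * t := by
  have hpne : p ≠ 0 := by positivity
  have idp : ∀ c : ℝ, 0 ≤ c → c ^ (p - 1) * c = c ^ p := by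
    intro c hc
    rcases hc.eq_or_lt with h | h
    · rw [← h, Real.zero_rpow hpne, Real.zero_rpow (by intro h'; linarith : p - 1 ≠ 0), mul_zero]
    · rw [← Real.rpow_add_one h.ne']; ring_nf
  have idp2 : ∀ c : ℝ, 0 ≤ c → c ^ (p - 2) * c = c ^ (p - 1) := by
    intro c hc
    rcases hc.eq_or_lt with h | h
    · rw [← h, mul_zero, Real.zero_rpow (by intro h'; linarith : p - 1 ≠ 0)]
    · rw [← Real.rpow_add_one h.ne']; ring_nf
  have i1 := idp a ha; have i2 := idp b hb
  have i3 := idp2 a ha; have i4 := idp2 b hb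
  -- endpoint t = a*b  (via symmetry in a,b)
  have H1 : (p - 1) * (a * a - 2 * (a * b) + b * b) * (a + b) ^ (p - 2) ≤
      a ^ p + b ^ p - (a ^ (p - 2) + b ^ (p - 2)) * (a * b) := by
    rcases le_total b a with hba | hba
    · have haz : 0 < a := by linarith
      have h := endpoint1 hp1 hp2 haz hb hba
      have e : (a ^ (p - 1) - b ^ (p - 1)) * (a - b) =
          a ^ p + b ^ p - (a ^ (p - 2) + b ^ (p - 2)) * (a * b) := by
        linear_combination i1 + i2 + b * i3 + a * i4
      calc (p - 1) * (a * a - 2 * (a * b) + b * b) * (a + b) ^ (p - 2)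
          = (p - 1) * (a - b) ^ 2 * (a + b) ^ (p - 2) := by ring
        _ ≤ (a ^ (p - 1) - b ^ (p - 1)) * (a - b) := h
        _ = _ := e
    · have hbz : 0 < b := by linarith
      have h := endpoint1 hp1 hp2 hbz ha hba
      have e : (b ^ (p - 1) - a ^ (p - 1)) * (b - a) =
          a ^ p + b ^ p - (a ^ (p - 2) + b ^ (p - 2)) * (a * b) := by
        linear_combination i1 + i2 + b * i3 + a * i4
      calc (p - 1) * (a * a - 2 * (a * b) + b * b) * (a + b) ^ (p - 2)
          = (p - 1) * (b - a) ^ 2 * (b + a) ^ (p - 2) := by ring_nf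
        _ ≤ (b ^ (p - 1) - a ^ (p - 1)) * (b - a) := h
        _ = _ := e
  -- endpoint t = -(a*b)
  have H2 : (p - 1) * (a * a + 2 * (a * b) + b * b) * (a + b) ^ (p - 2) ≤
      a ^ p + b ^ p + (a ^ (p - 2) + b ^ (p - 2)) * (a * b) := by
    have h := endpoint2 hp1 hp2 ha hb hab
    have e : (a ^ (p - 1) + b ^ (p - 1)) * (a + b) =
        a ^ p + b ^ p + (a ^ (p - 2) + b ^ (p - 2)) * (a * b) := by
      linear_combination i1 + i2 - b * i3 - a * i4
    calc (p - 1) * (a * a + 2 * (a * b) + b * b) * (a + b) ^ (p - 2)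
        = (p - 1) * (a + b) ^ 2 * (a + b) ^ (p - 2) := by ring
      _ ≤ (a ^ (p - 1) + b ^ (p - 1)) * (a + b) := h
      _ = _ := e
  -- affine interpolation in t
  rcases (mul_nonneg ha hb).eq_or_lt with hc | hc
  · have hc' : a * b = 0 := hc.symm
    have ht0 : t = 0 := le_antisymm (hc' ▸ ht2) (by rw [hc'] at ht1; linarith)
    subst ht0
    rw [hc'] at H1
    linarith [H1]
  · have q1 : 0 ≤ (a * b + t) * (a ^ p + b ^ p - (a ^ (p - 2) + b ^ (p - 2)) * (a * b) -
        (p - 1) * (a * a - 2 * (a * b) + b * b) * (a + b) ^ (p - 2)) :=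
      mul_nonneg (by linarith) (by linarith)
    have q2 : 0 ≤ (a * b - t) * (a ^ p + b ^ p + (a ^ (p - 2) + b ^ (p - 2)) * (a * b) -
        (p - 1) * (a * a + 2 * (a * b) + b * b) * (a + b) ^ (p - 2)) :=
      mul_nonneg (by linarith) (by linarith)
    have hsum : 0 ≤ 2 * (a * b) * (a ^ p + b ^ p - (a ^ (p - 2) + b ^ (p - 2)) * t -
        (p - 1) * (a * a - 2 * t + b * b) * (a + b) ^ (p - 2)) := by nlinarith [q1, q2]
    nlinarith [hsum, hc]

/-- p-Laplacian monotonicity inequality for `1 < p ≤ 2`. -/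
theorem plap_monotone_small_p (d : ℕ) (p : ℝ) (hp1 : 1 < p) (hp2 : p ≤ 2)
    (x y : EuclideanSpace ℝ (Fin d)) (hxy : ¬(x = 0 ∧ y = 0)) :
    (p - 1) * ‖x - y‖ ^ 2 * (‖x‖ + ‖y‖) ^ (p - 2) ≤
      (inner ℝ ((‖x‖ ^ (p - 2)) • x - (‖y‖ ^ (p - 2)) • y) (x - y) : ℝ) := by
  have ha : 0 ≤ ‖x‖ := norm_nonneg x
  have hb : 0 ≤ ‖y‖ := norm_nonneg y
  have hab : 0 < ‖x‖ + ‖y‖ := by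
    rcases (add_nonneg ha hb).eq_or_lt with h | h
    · exfalso
      have ha0 : ‖x‖ = 0 := by linarith
      have hb0 : ‖y‖ = 0 := by linarith
      exact hxy ⟨norm_eq_zero.mp ha0, norm_eq_zero.mp hb0⟩
    · exact h
  have ht : |(inner ℝ x y : ℝ)| ≤ ‖x‖ * ‖y‖ := abs_real_inner_le_norm x y
  have hnorm : ‖x - y‖ ^ 2 = ‖x‖ * ‖x‖ - 2 * (inner ℝ x y : ℝ) + ‖y‖ * ‖y‖ := by
    rw [norm_sub_sq_real]; ring
  have hinner : (inner ℝ ((‖x‖ ^ (p - 2)) • x - (‖y‖ ^ (p - 2)) • y) (x - y) : ℝ) =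
      ‖x‖ ^ (p - 2) * (‖x‖ * ‖x‖) + ‖y‖ ^ (p - 2) * (‖y‖ * ‖y‖) -
        (‖x‖ ^ (p - 2) + ‖y‖ ^ (p - 2)) * (inner ℝ x y : ℝ) := by
    simp only [inner_sub_left, inner_sub_right, real_inner_smul_left,
      real_inner_self_eq_norm_mul_norm, real_inner_comm y x]
    ring
  have hpne : p ≠ 0 := by positivity
  have idq : ∀ c : ℝ, 0 ≤ c → c ^ (p - 2) * (c * c) = c ^ p := by
    intro c hc
    rcases hc.eq_or_lt with h | h
    · rw [← h, Real.zero_rpow hpne, mul_zero, mul_zero]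
    · rw [← mul_assoc, ← Real.rpow_add_one h.ne', ← Real.rpow_add_one h.ne']; ring_nf
  rw [hinner, hnorm, idq ‖x‖ ha, idq ‖y‖ hb]
  exact scalar_key hp1 hp2 ha hb hab (abs_le.mp ht).1 (abs_le.mp ht).2
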